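/- Let M be a subspace of ℂ^d and let T be a linear operator on ℂ^d such that ‖T x‖ ≤ ‖x‖ for all x, T x = x for every x ∈ M⊥, T maps M into M, and ‖T x‖ = ‖x‖ implies x ∈ M⊥. Suppose T x = λ x for some nonzero x ∈ ℂ^d and λ ∈ ℂ. Then either λ = 1 or |λ| < 1; moreover, λ = 1 if and only if x ∈ M⊥, and |λ| < 1 if and only if x ∈ M. -/

import Mathlib

/-- Let `T` be a linear contraction on `ℂ^d` fixing `Mᗮ`, leaving `M` invariant,
and such that `‖T x‖ = ‖x‖` implies `x ∈ Mᗮ`.  If `T x = λ x` with `x ≠ 0`, then `λ = 1` or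
`|λ| < 1`; moreover `λ = 1 ↔ x ∈ Mᗮ` and `|λ| < 1 ↔ x ∈ M`. -/
theorem stmt_12 {d : ℕ} (M : Submodule ℂ (EuclideanSpace ℂ (Fin d)))
    (T : EuclideanSpace ℂ (Fin d) →ₗ[ℂ] EuclideanSpace ℂ (Fin d))
    (hcon : ∀ x, ‖T x‖ ≤ ‖x‖)
    (hfix : ∀ x ∈ Mᗮ, T x = x)
    (hinv : ∀ x ∈ M, T x ∈ M)
    (hstrict : ∀ x, ‖T x‖ = ‖x‖ → x ∈ Mᗮ)
    (x : EuclideanSpace ℂ (Fin d)) (hx : x ≠ 0) (lam : ℂ) (hlam : T x = lam • x) :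
    (lam = 1 ∨ ‖lam‖ < 1) ∧ (lam = 1 ↔ x ∈ Mᗮ) ∧ (‖lam‖ < 1 ↔ x ∈ M) := by
  have hx0 : (0:ℝ) < ‖x‖ := norm_pos_iff.mpr hx
  have habs : ‖lam‖ ≤ 1 := by
    have h := hcon x
    rw [hlam, norm_smul] at h
    have : ‖lam‖ * ‖x‖ ≤ 1 * ‖x‖ := by simpa using h
    exact le_of_mul_le_mul_right this hx0
  have h1 : lam = 1 ↔ x ∈ Mᗮ := by
    constructor
    · intro h
      apply hstrict
      rw [hlam, h, one_smul]
    · intro h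
      have hfx := hfix x h
      rw [hlam] at hfx
      have hz : (lam - 1) • x = 0 := by rw [sub_smul, one_smul, hfx, sub_self]
      rcases smul_eq_zero.mp hz with h' | h'
      · exact sub_eq_zero.mp h'
      · exact absurd h' hx
  have hdich : lam = 1 ∨ ‖lam‖ < 1 := by
    by_cases h : ‖lam‖ = 1
    · left
      apply h1.mpr
      apply hstrict
      rw [hlam, norm_smul, h, one_mul]
    · right
      exact lt_of_le_of_ne habs h
  refine ⟨hdich, h1, ?_, ?_⟩
  · intro hlt
    obtain ⟨m, hm, p, hp, hxd⟩ := M.exists_add_mem_mem_orthogonal x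
    have hT : T m + p = lam • m + lam • p := by
      have : T m + T p = lam • (m + p) := by rw [← map_add, ← hxd, hlam, hxd]
      rw [hfix p hp, smul_add] at this
      exact this
    have hkey : T m - lam • m = lam • p - p := by
      have := hT
      abel_nf
      linear_combination (norm := module) hT
    have hmem1 : T m - lam • m ∈ M := M.sub_mem (hinv m hm) (M.smul_mem _ hm)
    have hmem2 : lam • p - p ∈ Mᗮ := Mᗮ.sub_mem (Mᗮ.smul_mem _ hp) hp
    have hzero : lam • p - p = 0 := by
      have : lam • p - p ∈ M ⊓ Mᗮ := ⟨hkey ▸ hmem1, hmem2⟩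
      simpa [M.inf_orthogonal_eq_bot] using this
    have hp0 : p = 0 := by
      have hz : (lam - 1) • p = 0 := by rw [sub_smul, one_smul]; exact hzero
      rcases smul_eq_zero.mp hz with h' | h'
      · exfalso
        have : lam = 1 := sub_eq_zero.mp h'
        rw [this] at hlt
        simp at hlt
      · exact h'
    rw [hxd, hp0, add_zero]
    exact hm
  · intro hmem
    rcases hdich with h | h
    · exfalso
      have hperp := h1.mp h
      have : x ∈ M ⊓ Mᗮ := ⟨hmem, hperp⟩
      rw [M.inf_orthogonal_eq_bot] at this
      exact hx (by simpa using this)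
    · exact h
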